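/- Consider the ROCP feasible set and objective f for given weights μ_1, ..., μ_n ≥ 0 and degrees d_1 ≥ ... ≥ d_n ≥ 1. If X is an optimal solution of ROCP, then the matrix X'' = (X + X')/2, where X' is obtained from X by reversing the order of its columns (x'_{ik} = x_{i,q−k+1}), is a feasible symmetric solution of ROCP (x''_{ik} = x''_{i,q−k+1} for all i,k) and is also optimal. -/

import Mathlib

open Matrix Finset

/-- The ROCP objective `f(X) = (1/2) ∑_{i,j} ∑_{k,l} μ_i x_{ik} μ_j x_{jl} |k - l|`. -/
noncomputable def fROCP {n q : ℕ} (μ : Fin n → ℝ) (X : Matrix (Fin n) (Fin q) ℝ) : ℝ :=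
  (1 / 2) * ∑ i, ∑ j, ∑ k, ∑ l,
    μ i * X i k * (μ j * X j l) * |((k : ℕ) : ℝ) - ((l : ℕ) : ℝ)|

/-- The feasible set of the relaxed optimal caterpillar problem (ROCP): box constraints,
unique assignment of each vertex, one internal vertex per backbone position, and balance
of vertex degrees (positions `k = 1, ..., q` are represented by `Fin q`, vertex indices
`i = 1, ..., n` by `Fin n`, internal indices being those with `(i : ℕ) < q`). -/
def ROCPFeasible (n q : ℕ) (d : Fin n → ℕ) (X : Matrix (Fin n) (Fin q) ℝ) : Prop :=
  (∀ i k, 0 ≤ X i k ∧ X i k ≤ 1) ∧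
  (∀ i, ∑ k, X i k = 1) ∧
  (∀ k, (∑ i : Fin n, if (i : ℕ) < q then X i k else 0) = 1) ∧
  (∀ k : Fin q, (k : ℕ) ≠ 0 → (k : ℕ) ≠ q - 1 → ∑ i, ((d i : ℝ) - 2) * X i k = 0) ∧
  (∀ k : Fin q, ((k : ℕ) = 0 ∨ (k : ℕ) = q - 1) → ∑ i, ((d i : ℝ) - 2) * X i k = -1)

/-- A matrix is a symmetric solution if `x_{ik} = x_{i, q-k+1}` for all `i`, `k`. -/
def SymmetricSol {n q : ℕ} (X : Matrix (Fin n) (Fin q) ℝ) : Prop :=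
  ∀ i k, X i k = X i k.rev


private lemma rev_sum_aux {q : ℕ} (g : Fin q → ℝ) : ∑ k : Fin q, g k.rev = ∑ k, g k :=
  Fintype.sum_equiv Fin.revPerm (fun k => g (Fin.rev k)) g (fun _ => rfl)

private lemma cnt_aux (q t : ℕ) :
    ∑ i ∈ Finset.range q, (if t ≤ i then (1:ℝ) else 0) = ((q - t : ℕ) : ℝ) := by
  induction q with
  | zero => simp
  | succ q ih =>
    rw [Finset.sum_range_succ, ih]
    rcases le_or_gt t q with h | h
    · rw [if_pos h, Nat.succ_sub h]; push_cast; ring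
    · rw [if_neg (not_le.mpr h), Nat.sub_eq_zero_of_le h.le, Nat.sub_eq_zero_of_le h]; simp

private lemma abs_rev_aux {q : ℕ} (k l : Fin q) :
    |((k.rev : ℕ) : ℝ) - ((l.rev : ℕ) : ℝ)| = |((k : ℕ) : ℝ) - ((l : ℕ) : ℝ)| := by
  have hk : ((k.rev : ℕ) : ℝ) = (q : ℝ) - ((k:ℕ) + 1) := by
    rw [Fin.val_rev, Nat.cast_sub (by omega : (k:ℕ) + 1 ≤ q)]; push_cast; ring
  have hl : ((l.rev : ℕ) : ℝ) = (q : ℝ) - ((l:ℕ) + 1) := by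
    rw [Fin.val_rev, Nat.cast_sub (by omega : (l:ℕ) + 1 ≤ q)]; push_cast; ring
  rw [hk, hl, show (q:ℝ) - ((k:ℕ)+1) - ((q:ℝ) - ((l:ℕ)+1)) = ((l:ℕ):ℝ) - ((k:ℕ):ℝ) by ring,
    abs_sub_comm]

/-- `|k-l|` expanded via indicator functions. -/
private lemma abs_eq_sum_aux {q : ℕ} (k l : Fin q) :
    |((k : ℕ) : ℝ) - ((l : ℕ) : ℝ)| = ∑ m : Fin q,
      ((if (k:ℕ) ≤ (m:ℕ) then (1:ℝ) else 0) + (if (l:ℕ) ≤ (m:ℕ) then (1:ℝ) else 0)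
        - 2 * ((if (k:ℕ) ≤ (m:ℕ) then (1:ℝ) else 0) * (if (l:ℕ) ≤ (m:ℕ) then (1:ℝ) else 0))) := by
  have hprod : ∀ m : Fin q,
      (if (k:ℕ) ≤ (m:ℕ) then (1:ℝ) else 0) * (if (l:ℕ) ≤ (m:ℕ) then (1:ℝ) else 0)
        = if max (k:ℕ) (l:ℕ) ≤ (m:ℕ) then (1:ℝ) else 0 := by
    intro m; split_ifs <;> simp_all <;> omega
  have hcnt : ∀ t : ℕ, ∑ m : Fin q, (if t ≤ (m:ℕ) then (1:ℝ) else 0) = ((q - t : ℕ) : ℝ) := by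
    intro t
    rw [Fin.sum_univ_eq_sum_range (fun i => if t ≤ i then (1:ℝ) else 0) q, cnt_aux]
  rw [Finset.sum_sub_distrib, Finset.sum_add_distrib, Finset.sum_congr rfl
    (fun m _ => congrArg (2 * ·) (hprod m)), ← Finset.mul_sum, hcnt, hcnt, hcnt]
  have hkq : (k:ℕ) < q := k.isLt
  have hlq : (l:ℕ) < q := l.isLt
  rcases le_total (k:ℕ) (l:ℕ) with h | h
  · rw [max_eq_right h, abs_of_nonpos (by simp [sub_nonpos]; exact_mod_cast h),
      Nat.cast_sub hkq.le, Nat.cast_sub hlq.le]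
    ring
  · rw [max_eq_left h, abs_of_nonneg (by simp [sub_nonneg]; exact_mod_cast h),
      Nat.cast_sub hkq.le, Nat.cast_sub hlq.le]
    ring

/-- the quadratic identity for a rank-structured term -/
private lemma quad_aux {q : ℕ} (c a : Fin q → ℝ) (hS : ∑ k, c k = 0) :
    ∑ k, ∑ l, c k * c l * (a k + a l - 2 * (a k * a l)) = -2 * (∑ k, c k * a k)^2 := by
  have h1 : ∀ k : Fin q, ∑ l, c k * c l * (a k + a l - 2 * (a k * a l))
      = c k * a k * (∑ l, c l) + c k * (∑ l, c l * a l)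
        - 2 * (c k * a k) * (∑ l, c l * a l) := by
    intro k
    calc ∑ l, c k * c l * (a k + a l - 2 * (a k * a l))
        = ∑ l, (c k * a k * c l + c k * (c l * a l) - 2 * (c k * a k) * (c l * a l)) :=
          Finset.sum_congr rfl fun l _ => by ring
      _ = _ := by
          rw [Finset.sum_sub_distrib, Finset.sum_add_distrib, ← Finset.mul_sum,
            ← Finset.mul_sum, ← Finset.mul_sum]
  calc ∑ k, ∑ l, c k * c l * (a k + a l - 2 * (a k * a l))
      = ∑ k, (c k * a k * (∑ l, c l) + c k * (∑ l, c l * a l)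
          - 2 * (c k * a k) * (∑ l, c l * a l)) := Finset.sum_congr rfl fun k _ => h1 k
    _ = (∑ k, c k * a k) * (∑ l, c l) + (∑ k, c k) * (∑ l, c l * a l)
          - 2 * (∑ k, c k * a k) * (∑ l, c l * a l) := by
        rw [Finset.sum_sub_distrib, Finset.sum_add_distrib, ← Finset.sum_mul,
          ← Finset.sum_mul, ← Finset.sum_mul, ← Finset.mul_sum]
    _ = -2 * (∑ k, c k * a k)^2 := by rw [hS]; ring


private lemma key_aux {q : ℕ} (c : Fin q → ℝ) (h : ∑ k, c k = 0) :
    ∑ k : Fin q, ∑ l : Fin q, c k * c l * |((k:ℕ):ℝ) - ((l:ℕ):ℝ)| ≤ 0 := by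
  calc ∑ k : Fin q, ∑ l : Fin q, c k * c l * |((k:ℕ):ℝ) - ((l:ℕ):ℝ)|
      = ∑ k : Fin q, ∑ l : Fin q, ∑ m : Fin q, c k * c l *
          ((if (k:ℕ) ≤ (m:ℕ) then (1:ℝ) else 0) + (if (l:ℕ) ≤ (m:ℕ) then (1:ℝ) else 0)
            - 2 * ((if (k:ℕ) ≤ (m:ℕ) then (1:ℝ) else 0) * (if (l:ℕ) ≤ (m:ℕ) then (1:ℝ) else 0))) :=
        Finset.sum_congr rfl fun k _ => Finset.sum_congr rfl fun l _ => by
          rw [abs_eq_sum_aux, Finset.mul_sum]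
    _ = ∑ k : Fin q, ∑ m : Fin q, ∑ l : Fin q, c k * c l *
          ((if (k:ℕ) ≤ (m:ℕ) then (1:ℝ) else 0) + (if (l:ℕ) ≤ (m:ℕ) then (1:ℝ) else 0)
            - 2 * ((if (k:ℕ) ≤ (m:ℕ) then (1:ℝ) else 0) * (if (l:ℕ) ≤ (m:ℕ) then (1:ℝ) else 0))) :=
        Finset.sum_congr rfl fun k _ => Finset.sum_comm
    _ = ∑ m : Fin q, ∑ k : Fin q, ∑ l : Fin q, c k * c l *
          ((if (k:ℕ) ≤ (m:ℕ) then (1:ℝ) else 0) + (if (l:ℕ) ≤ (m:ℕ) then (1:ℝ) else 0)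
            - 2 * ((if (k:ℕ) ≤ (m:ℕ) then (1:ℝ) else 0) * (if (l:ℕ) ≤ (m:ℕ) then (1:ℝ) else 0))) :=
        Finset.sum_comm
    _ = ∑ m : Fin q, -2 * (∑ k : Fin q, c k * (if (k:ℕ) ≤ (m:ℕ) then (1:ℝ) else 0))^2 :=
        Finset.sum_congr rfl fun m _ => quad_aux c (fun k => if (k:ℕ) ≤ (m:ℕ) then (1:ℝ) else 0) h
    _ ≤ 0 := Finset.sum_nonpos fun m _ => by
        nlinarith [sq_nonneg (∑ k : Fin q, c k * (if (k:ℕ) ≤ (m:ℕ) then (1:ℝ) else 0))]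

private lemma fROCP_w {n q : ℕ} (μ : Fin n → ℝ) (X : Matrix (Fin n) (Fin q) ℝ) :
    fROCP μ X = (1/2) * ∑ k : Fin q, ∑ l : Fin q,
      (∑ i, μ i * X i k) * (∑ j, μ j * X j l) * |((k:ℕ):ℝ) - ((l:ℕ):ℝ)| := by
  unfold fROCP
  congr 1
  calc ∑ i, ∑ j, ∑ k, ∑ l, μ i * X i k * (μ j * X j l) * |((k:ℕ):ℝ) - ((l:ℕ):ℝ)|
      = ∑ i, ∑ k, ∑ j, ∑ l, μ i * X i k * (μ j * X j l) * |((k:ℕ):ℝ) - ((l:ℕ):ℝ)| :=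
        Finset.sum_congr rfl fun i _ => Finset.sum_comm
    _ = ∑ k, ∑ i, ∑ j, ∑ l, μ i * X i k * (μ j * X j l) * |((k:ℕ):ℝ) - ((l:ℕ):ℝ)| :=
        Finset.sum_comm
    _ = ∑ k, ∑ i, ∑ l, ∑ j, μ i * X i k * (μ j * X j l) * |((k:ℕ):ℝ) - ((l:ℕ):ℝ)| :=
        Finset.sum_congr rfl fun k _ => Finset.sum_congr rfl fun i _ => Finset.sum_comm
    _ = ∑ k, ∑ l, ∑ i, ∑ j, μ i * X i k * (μ j * X j l) * |((k:ℕ):ℝ) - ((l:ℕ):ℝ)| :=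
        Finset.sum_congr rfl fun k _ => Finset.sum_comm
    _ = ∑ k : Fin q, ∑ l : Fin q,
        (∑ i, μ i * X i k) * (∑ j, μ j * X j l) * |((k:ℕ):ℝ) - ((l:ℕ):ℝ)| := by
        refine Finset.sum_congr rfl fun k _ => Finset.sum_congr rfl fun l _ => ?_
        rw [Finset.sum_mul_sum, Finset.sum_mul]
        exact Finset.sum_congr rfl fun i _ => by rw [Finset.sum_mul]

theorem symmetrized_optimal_solution (n q : ℕ) (hnq : q ≤ n) (hq : 4 ≤ q)
    (d : Fin n → ℕ) (μ : Fin n → ℝ)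
    (hμ : ∀ i, 0 ≤ μ i)
    (hd_anti : ∀ i j : Fin n, i ≤ j → d j ≤ d i)
    (hd_sum : ∑ i, d i = 2 * (n - 1))
    (hd_int : ∀ i : Fin n, (i : ℕ) < q → 1 < d i)
    (hd_pend : ∀ i : Fin n, q ≤ (i : ℕ) → d i = 1)
    (X : Matrix (Fin n) (Fin q) ℝ)
    (hfeas : ROCPFeasible n q d X)
    (hopt : ∀ Y, ROCPFeasible n q d Y → fROCP μ Y ≤ fROCP μ X) :
    ROCPFeasible n q d (fun i k => (X i k + X i k.rev) / 2) ∧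
    SymmetricSol (fun i k => (X i k + X i k.rev) / 2) ∧
    (∀ Y, ROCPFeasible n q d Y →
      fROCP μ Y ≤ fROCP μ (fun i k => (X i k + X i k.rev) / 2)) := by
  obtain ⟨h1, h2, h3, h4, h5⟩ := hfeas
  have hfeas' : ROCPFeasible n q d (fun i k => (X i k + X i k.rev) / 2) := by
    refine ⟨?_, ?_, ?_, ?_, ?_⟩
    · intro i k
      have a1 := h1 i k; have a2 := h1 i k.rev
      constructor <;> [linarith [a1.1, a2.1]; linarith [a1.2, a2.2]]
    · intro i
      have hr : ∑ k : Fin q, X i k.rev = 1 := by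
        rw [rev_sum_aux (fun k => X i k)]; exact h2 i
      show ∑ k : Fin q, (X i k + X i k.rev) / 2 = 1
      rw [← Finset.sum_div, Finset.sum_add_distrib, h2 i, hr]; norm_num
    · intro k
      have hpt : ∀ i : Fin n, (if (i:ℕ) < q then (X i k + X i k.rev) / 2 else 0)
          = ((if (i:ℕ) < q then X i k else 0) + (if (i:ℕ) < q then X i k.rev else 0)) / 2 := by
        intro i; split_ifs <;> norm_num
      rw [Finset.sum_congr rfl fun i _ => hpt i, ← Finset.sum_div, Finset.sum_add_distrib,
        h3 k, h3 k.rev]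
      norm_num
    · intro k hk0 hk1
      have hrev0 : (k.rev : ℕ) ≠ 0 := by rw [Fin.val_rev]; omega
      have hrev1 : (k.rev : ℕ) ≠ q - 1 := by rw [Fin.val_rev]; omega
      have hpt : ∀ i : Fin n, ((d i : ℝ) - 2) * ((X i k + X i k.rev) / 2)
          = (((d i : ℝ) - 2) * X i k + ((d i : ℝ) - 2) * X i k.rev) / 2 := fun i => by ring
      rw [Finset.sum_congr rfl fun i _ => hpt i, ← Finset.sum_div, Finset.sum_add_distrib,
        h4 k hk0 hk1, h4 k.rev hrev0 hrev1]
      norm_num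
    · intro k hk
      have hrev : ((k.rev : ℕ) = 0 ∨ (k.rev : ℕ) = q - 1) := by
        rw [Fin.val_rev]; omega
      have hpt : ∀ i : Fin n, ((d i : ℝ) - 2) * ((X i k + X i k.rev) / 2)
          = (((d i : ℝ) - 2) * X i k + ((d i : ℝ) - 2) * X i k.rev) / 2 := fun i => by ring
      rw [Finset.sum_congr rfl fun i _ => hpt i, ← Finset.sum_div, Finset.sum_add_distrib,
        h5 k hk, h5 k.rev hrev]
      norm_num
  refine ⟨hfeas', ?_, ?_⟩
  · intro i k
    show (X i k + X i k.rev) / 2 = (X i k.rev + X i k.rev.rev) / 2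
    rw [Fin.rev_rev]; ring
  · intro Y hY
    refine le_trans (hopt Y hY) ?_
    -- notation: w k = ∑ i, μ i * X i k
    set w : Fin q → ℝ := fun k => ∑ i, μ i * X i k with hw
    -- the four quadratic forms
    set Q1 : ℝ := ∑ k : Fin q, ∑ l : Fin q, w k * w l * |((k:ℕ):ℝ) - ((l:ℕ):ℝ)| with hQ1
    set Q2 : ℝ := ∑ k : Fin q, ∑ l : Fin q, w k * w l.rev * |((k:ℕ):ℝ) - ((l:ℕ):ℝ)| with hQ2
    set Q3 : ℝ := ∑ k : Fin q, ∑ l : Fin q, w k.rev * w l * |((k:ℕ):ℝ) - ((l:ℕ):ℝ)| with hQ3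
    set Q4 : ℝ := ∑ k : Fin q, ∑ l : Fin q, w k.rev * w l.rev * |((k:ℕ):ℝ) - ((l:ℕ):ℝ)| with hQ4
    have hrevw : ∑ k : Fin q, w k.rev = ∑ k : Fin q, w k := rev_sum_aux w
    -- Q4 = Q1 by reindexing both sums with rev
    have hQ41 : Q4 = Q1 := by
      rw [hQ4, hQ1]
      calc ∑ k : Fin q, ∑ l : Fin q, w k.rev * w l.rev * |((k:ℕ):ℝ) - ((l:ℕ):ℝ)|
          = ∑ k : Fin q, ∑ l : Fin q, w k.rev * w l * |((k:ℕ):ℝ) - ((l.rev:ℕ):ℝ)| := by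
            refine Finset.sum_congr rfl fun k _ => ?_
            rw [← rev_sum_aux (fun l => w k.rev * w l * |((k:ℕ):ℝ) - ((l.rev:ℕ):ℝ)|)]
            exact Finset.sum_congr rfl fun l _ => by rw [Fin.rev_rev]
        _ = ∑ k : Fin q, ∑ l : Fin q, w k * w l * |((k.rev:ℕ):ℝ) - ((l.rev:ℕ):ℝ)| := by
            rw [← rev_sum_aux
              (fun k => ∑ l : Fin q, w k * w l * |((k.rev:ℕ):ℝ) - ((l.rev:ℕ):ℝ)|)]
            exact Finset.sum_congr rfl fun k _ => Finset.sum_congr rfl fun l _ => by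
              rw [Fin.rev_rev]
        _ = ∑ k : Fin q, ∑ l : Fin q, w k * w l * |((k:ℕ):ℝ) - ((l:ℕ):ℝ)| :=
            Finset.sum_congr rfl fun k _ => Finset.sum_congr rfl fun l _ => by
              rw [abs_rev_aux]
    -- negative-type inequality
    have hkey : Q1 - Q2 - Q3 + Q4 ≤ 0 := by
      have hc : ∑ k : Fin q, (w k - w k.rev) = 0 := by
        rw [Finset.sum_sub_distrib, hrevw]; ring
      have := key_aux (fun k => w k - w k.rev) hc
      calc Q1 - Q2 - Q3 + Q4
          = ∑ k : Fin q, ∑ l : Fin q,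
              (w k - w k.rev) * (w l - w l.rev) * |((k:ℕ):ℝ) - ((l:ℕ):ℝ)| := by
            rw [hQ1, hQ2, hQ3, hQ4]
            rw [← Finset.sum_sub_distrib, ← Finset.sum_sub_distrib, ← Finset.sum_add_distrib]
            refine Finset.sum_congr rfl fun k _ => ?_
            rw [← Finset.sum_sub_distrib, ← Finset.sum_sub_distrib, ← Finset.sum_add_distrib]
            exact Finset.sum_congr rfl fun l _ => by ring
        _ ≤ 0 := this
    -- rewrite both objectives via fROCP_w
    rw [fROCP_w, fROCP_w μ (fun i k => (X i k + X i k.rev) / 2)]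
    have hsum : ∀ k : Fin q, ∑ i, μ i * ((X i k + X i k.rev) / 2) = (w k + w k.rev) / 2 := by
      intro k
      rw [hw]
      rw [show (∑ i, μ i * X i k + ∑ i, μ i * X i k.rev) / 2
          = ∑ i, (μ i * X i k + μ i * X i k.rev) / 2 by
        rw [← Finset.sum_add_distrib, ← Finset.sum_div]]
      exact Finset.sum_congr rfl fun i _ => by ring
    have hrhs : ∑ k : Fin q, ∑ l : Fin q,
        (∑ i, μ i * ((X i k + X i k.rev) / 2)) * (∑ j, μ j * ((X j l + X j l.rev) / 2)) *
          |((k:ℕ):ℝ) - ((l:ℕ):ℝ)|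
        = (Q1 + Q2 + Q3 + Q4) / 4 := by
      rw [hQ1, hQ2, hQ3, hQ4]
      rw [show (∑ k : Fin q, ∑ l : Fin q, w k * w l * |((k:ℕ):ℝ) - ((l:ℕ):ℝ)|)
            + (∑ k : Fin q, ∑ l : Fin q, w k * w l.rev * |((k:ℕ):ℝ) - ((l:ℕ):ℝ)|)
            + (∑ k : Fin q, ∑ l : Fin q, w k.rev * w l * |((k:ℕ):ℝ) - ((l:ℕ):ℝ)|)
            + (∑ k : Fin q, ∑ l : Fin q, w k.rev * w l.rev * |((k:ℕ):ℝ) - ((l:ℕ):ℝ)|)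
          = ∑ k : Fin q, ∑ l : Fin q,
              (w k * w l * |((k:ℕ):ℝ) - ((l:ℕ):ℝ)|
                + w k * w l.rev * |((k:ℕ):ℝ) - ((l:ℕ):ℝ)|
                + w k.rev * w l * |((k:ℕ):ℝ) - ((l:ℕ):ℝ)|
                + w k.rev * w l.rev * |((k:ℕ):ℝ) - ((l:ℕ):ℝ)|) by
        rw [← Finset.sum_add_distrib, ← Finset.sum_add_distrib, ← Finset.sum_add_distrib]
        exact Finset.sum_congr rfl fun k _ => by
          rw [← Finset.sum_add_distrib, ← Finset.sum_add_distrib, ← Finset.sum_add_distrib]]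
      rw [Finset.sum_div]
      refine Finset.sum_congr rfl fun k _ => ?_
      rw [Finset.sum_div]
      refine Finset.sum_congr rfl fun l _ => ?_
      rw [hsum k, hsum l]
      ring
    rw [hrhs]
    have hQ1' : ∑ k : Fin q, ∑ l : Fin q,
        (∑ i, μ i * X i k) * (∑ j, μ j * X j l) * |((k:ℕ):ℝ) - ((l:ℕ):ℝ)| = Q1 := by
      rw [hQ1]
    rw [hQ1']
    -- conclude:  Q2 + Q3 ≥ 2 Q1, hence (Q1+Q2+Q3+Q4)/4 ≥ Q1
    rw [hQ41] at hkey
    linarith
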